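/- Let G = SL(3,ℝ), P its upper triangular subgroup, N its unipotent upper triangular subgroup, and W = {1, s1, s2, z1, z2, w0} the set of six explicit monomial matrices (permutation matrices with signs, determinant 1). Then G is the disjoint union over w ∈ W of the double cosets P·w·N; equivalently, every g ∈ SL(3,ℝ) can be written g = p·w·n for unique w ∈ W with p ∈ P, n ∈ N, and the double cosets PwP for distinct w ∈ W are disjoint. -/

import Mathlib

open Matrix

def nmat (x y z : ℝ) : Matrix (Fin 3) (Fin 3) ℝ :=
  !![1, x, y; 0, 1, z; 0, 0, 1]

def s1mat : Matrix (Fin 3) (Fin 3) ℝ := !![0, 1, 0; 1, 0, 0; 0, 0, -1]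
def s2mat : Matrix (Fin 3) (Fin 3) ℝ := !![-1, 0, 0; 0, 0, 1; 0, 1, 0]
def z1mat : Matrix (Fin 3) (Fin 3) ℝ := !![0, -1, 0; 0, 0, -1; 1, 0, 0]
def z2mat : Matrix (Fin 3) (Fin 3) ℝ := !![0, 0, 1; -1, 0, 0; 0, -1, 0]
def w0mat : Matrix (Fin 3) (Fin 3) ℝ := !![0, 0, -1; 0, -1, 0; -1, 0, 0]

def Wset : Set (Matrix (Fin 3) (Fin 3) ℝ) :=
  {1, s1mat, s2mat, z1mat, z2mat, w0mat}

/-- membership in `P`: upper triangular with determinant 1 -/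
def inP (p : Matrix (Fin 3) (Fin 3) ℝ) : Prop :=
  p.BlockTriangular id ∧ p.det = 1

/-- membership in `N`: unipotent upper triangular -/
def inN (m : Matrix (Fin 3) (Fin 3) ℝ) : Prop :=
  ∃ x y z : ℝ, m = nmat x y z

/-! ### auxiliary lemmas -/

lemma nmat_mul (x y z x' y' z' : ℝ) :
    nmat x y z * nmat x' y' z' = nmat (x + x') (y + x * z' + y') (z + z') := by
  ext i j
  fin_cases i <;> fin_cases j <;>
    simp [nmat, Matrix.mul_apply, Fin.sum_univ_three, Matrix.vecHead, Matrix.vecTail] <;> ring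

lemma nmat_zero : nmat 0 0 0 = 1 := by
  ext i j; fin_cases i <;> fin_cases j <;> simp [nmat, Matrix.vecHead, Matrix.vecTail]

lemma nmat_det (x y z : ℝ) : (nmat x y z).det = 1 := by
  simp [nmat, Matrix.det_fin_three, Matrix.vecHead, Matrix.vecTail]

lemma nmat_inv (x y z : ℝ) : nmat x y z * nmat (-x) (x * z - y) (-z) = 1 := by
  rw [nmat_mul, show x + -x = 0 by ring, show y + x * -z + (x * z - y) = 0 by ring,
    show z + -z = 0 by ring, nmat_zero]

lemma w0_sq : w0mat * w0mat = 1 := by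
  ext i j; fin_cases i <;> fin_cases j <;>
    simp [w0mat, Matrix.mul_apply, Fin.sum_univ_three, Matrix.vecHead, Matrix.vecTail]

lemma s1_sq : s1mat * s1mat = 1 := by
  ext i j; fin_cases i <;> fin_cases j <;>
    simp [s1mat, Matrix.mul_apply, Fin.sum_univ_three, Matrix.vecHead, Matrix.vecTail]

lemma s2_sq : s2mat * s2mat = 1 := by
  ext i j; fin_cases i <;> fin_cases j <;>
    simp [s2mat, Matrix.mul_apply, Fin.sum_univ_three, Matrix.vecHead, Matrix.vecTail]

lemma z2_z1 : z2mat * z1mat = 1 := by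
  ext i j; fin_cases i <;> fin_cases j <;>
    simp [z1mat, z2mat, Matrix.mul_apply, Fin.sum_univ_three, Matrix.vecHead, Matrix.vecTail]

lemma z1_z2 : z1mat * z2mat = 1 := by
  ext i j; fin_cases i <;> fin_cases j <;>
    simp [z1mat, z2mat, Matrix.mul_apply, Fin.sum_univ_three, Matrix.vecHead, Matrix.vecTail]

lemma s1_det : s1mat.det = 1 := by
  simp [s1mat, Matrix.det_fin_three, Matrix.vecHead, Matrix.vecTail]
lemma s2_det : s2mat.det = 1 := by
  simp [s2mat, Matrix.det_fin_three, Matrix.vecHead, Matrix.vecTail]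
lemma z1_det : z1mat.det = 1 := by
  simp [z1mat, Matrix.det_fin_three, Matrix.vecHead, Matrix.vecTail]
lemma z2_det : z2mat.det = 1 := by
  simp [z2mat, Matrix.det_fin_three, Matrix.vecHead, Matrix.vecTail]
lemma w0_det : w0mat.det = 1 := by
  simp [w0mat, Matrix.det_fin_three, Matrix.vecHead, Matrix.vecTail]

lemma tri_of (p : Matrix (Fin 3) (Fin 3) ℝ) (h1 : p 1 0 = 0) (h2 : p 2 0 = 0)
    (h3 : p 2 1 = 0) : p.BlockTriangular id := by
  intro i j hij
  fin_cases i <;> fin_cases j <;>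
    first
      | exact absurd hij (by decide)
      | assumption

lemma decomp_eq (g w winv : Matrix (Fin 3) (Fin 3) ℝ) (x y z : ℝ) (hw : winv * w = 1) :
    g = (g * nmat x y z * winv) * w * nmat (-x) (x * z - y) (-z) := by
  rw [mul_assoc (g * nmat x y z) winv w, hw, mul_one, mul_assoc, nmat_inv, mul_one]

lemma decomp_det (g winv : Matrix (Fin 3) (Fin 3) ℝ) (x y z : ℝ) (hg : g.det = 1)
    (hwinv : winv.det = 1) : (g * nmat x y z * winv).det = 1 := by
  rw [Matrix.det_mul, Matrix.det_mul, hg, nmat_det, hwinv]; ring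

lemma key (g p w : Matrix (Fin 3) (Fin 3) ℝ) (x y z : ℝ) (hp : inP p)
    (h : g = p * w * nmat x y z) :
    g 2 0 = p 2 2 * w 2 0 ∧ g 1 0 = p 1 1 * w 1 0 + p 1 2 * w 2 0 ∧
    g 2 1 = p 2 2 * (x * w 2 0 + w 2 1) ∧
    g 1 0 * g 2 1 - g 1 1 * g 2 0 = p 1 1 * p 2 2 * (w 1 0 * w 2 1 - w 1 1 * w 2 0) := by
  have h10 : p 1 0 = 0 := hp.1 (by decide)
  have h20 : p 2 0 = 0 := hp.1 (by decide)
  have h21 : p 2 1 = 0 := hp.1 (by decide)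
  subst h
  refine ⟨?_, ?_, ?_, ?_⟩ <;>
    simp [nmat, Matrix.mul_apply, Fin.sum_univ_three, Matrix.vecHead, Matrix.vecTail,
      h10, h20, h21] <;> ring

lemma diag_ne (p : Matrix (Fin 3) (Fin 3) ℝ) (hp : inP p) :
    p 1 1 ≠ 0 ∧ p 2 2 ≠ 0 := by
  have h10 : p 1 0 = 0 := hp.1 (by decide)
  have h20 : p 2 0 = 0 := hp.1 (by decide)
  have h21 : p 2 1 = 0 := hp.1 (by decide)
  have hd : p 0 0 * (p 1 1 * p 2 2) = 1 := by
    rw [← hp.2, Matrix.det_fin_three, h10, h20, h21]; ring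
  constructor <;> intro h0 <;> rw [h0] at hd <;> simp at hd

lemma sig_one (g p : Matrix (Fin 3) (Fin 3) ℝ) (x y z : ℝ) (hp : inP p)
    (h : g = p * 1 * nmat x y z) :
    g 2 0 = 0 ∧ g 1 0 = 0 ∧ g 2 1 = 0 := by
  obtain ⟨E1, E2, E3, _⟩ := key g p 1 x y z hp h
  norm_num [Matrix.one_apply, Fin.ext_iff] at E1 E2 E3
  exact ⟨E1, E2, E3⟩

lemma sig_s1 (g p : Matrix (Fin 3) (Fin 3) ℝ) (x y z : ℝ) (hp : inP p)
    (h : g = p * s1mat * nmat x y z) :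
    g 2 0 = 0 ∧ g 1 0 ≠ 0 ∧ g 2 1 = 0 := by
  obtain ⟨E1, E2, E3, _⟩ := key g p s1mat x y z hp h
  obtain ⟨hp11, _⟩ := diag_ne p hp
  norm_num [s1mat, Matrix.cons_val_two, Matrix.vecHead, Matrix.vecTail] at E1 E2 E3
  exact ⟨E1, E2 ▸ hp11, E3⟩

lemma sig_s2 (g p : Matrix (Fin 3) (Fin 3) ℝ) (x y z : ℝ) (hp : inP p)
    (h : g = p * s2mat * nmat x y z) :
    g 2 0 = 0 ∧ g 1 0 = 0 ∧ g 2 1 ≠ 0 := by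
  obtain ⟨E1, E2, E3, _⟩ := key g p s2mat x y z hp h
  obtain ⟨_, hp22⟩ := diag_ne p hp
  norm_num [s2mat, Matrix.cons_val_two, Matrix.vecHead, Matrix.vecTail] at E1 E2 E3
  exact ⟨E1, E2, E3 ▸ hp22⟩

lemma sig_z1 (g p : Matrix (Fin 3) (Fin 3) ℝ) (x y z : ℝ) (hp : inP p)
    (h : g = p * z1mat * nmat x y z) :
    g 2 0 ≠ 0 ∧ g 1 0 * g 2 1 - g 1 1 * g 2 0 = 0 := by
  obtain ⟨E1, _, _, E4⟩ := key g p z1mat x y z hp h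
  obtain ⟨_, hp22⟩ := diag_ne p hp
  norm_num [z1mat, Matrix.cons_val_two, Matrix.vecHead, Matrix.vecTail] at E1 E4
  exact ⟨E1 ▸ hp22, E4⟩

lemma sig_z2 (g p : Matrix (Fin 3) (Fin 3) ℝ) (x y z : ℝ) (hp : inP p)
    (h : g = p * z2mat * nmat x y z) :
    g 2 0 = 0 ∧ g 1 0 * g 2 1 - g 1 1 * g 2 0 ≠ 0 := by
  obtain ⟨E1, _, _, E4⟩ := key g p z2mat x y z hp h
  obtain ⟨hp11, hp22⟩ := diag_ne p hp
  norm_num [z2mat, Matrix.cons_val_two, Matrix.vecHead, Matrix.vecTail] at E1 E4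
  refine ⟨E1, ?_⟩
  rw [E4]
  exact mul_ne_zero hp11 hp22

lemma sig_w0 (g p : Matrix (Fin 3) (Fin 3) ℝ) (x y z : ℝ) (hp : inP p)
    (h : g = p * w0mat * nmat x y z) :
    g 2 0 ≠ 0 ∧ g 1 0 * g 2 1 - g 1 1 * g 2 0 ≠ 0 := by
  obtain ⟨E1, _, _, E4⟩ := key g p w0mat x y z hp h
  obtain ⟨hp11, hp22⟩ := diag_ne p hp
  norm_num [w0mat, Matrix.cons_val_two, Matrix.vecHead, Matrix.vecTail] at E1 E4
  constructor
  · rw [E1]; exact neg_ne_zero.mpr hp22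
  · rw [E4]
    simpa using mul_ne_zero hp11 hp22

/-- classification of the Weyl element from the invariants of `g` -/
lemma uniq (g p w : Matrix (Fin 3) (Fin 3) ℝ) (x y z : ℝ) (hp : inP p)
    (h : g = p * w * nmat x y z) (hw : w ∈ Wset) :
    w = if g 2 0 = 0 then
          (if g 1 0 * g 2 1 - g 1 1 * g 2 0 = 0 then
            (if g 1 0 = 0 then (if g 2 1 = 0 then 1 else s2mat) else s1mat)
          else z2mat)
        else (if g 1 0 * g 2 1 - g 1 1 * g 2 0 = 0 then z1mat else w0mat) := by
  simp only [Wset, Set.mem_insert_iff, Set.mem_singleton_iff] at hw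
  rcases hw with rfl | rfl | rfl | rfl | rfl | rfl
  · obtain ⟨A0, D0, I0⟩ := sig_one g p x y z hp h
    have M0 : g 1 0 * g 2 1 - g 1 1 * g 2 0 = 0 := by rw [A0, D0]; ring
    rw [if_pos A0, if_pos M0, if_pos D0, if_pos I0]
  · obtain ⟨A0, Dne, I0⟩ := sig_s1 g p x y z hp h
    have M0 : g 1 0 * g 2 1 - g 1 1 * g 2 0 = 0 := by rw [A0, I0]; ring
    rw [if_pos A0, if_pos M0, if_neg Dne]
  · obtain ⟨A0, D0, Ine⟩ := sig_s2 g p x y z hp h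
    have M0 : g 1 0 * g 2 1 - g 1 1 * g 2 0 = 0 := by rw [A0, D0]; ring
    rw [if_pos A0, if_pos M0, if_pos D0, if_neg Ine]
  · obtain ⟨Ane, M0⟩ := sig_z1 g p x y z hp h
    rw [if_neg Ane, if_pos M0]
  · obtain ⟨A0, Mne⟩ := sig_z2 g p x y z hp h
    rw [if_pos A0, if_neg Mne]
  · obtain ⟨Ane, Mne⟩ := sig_w0 g p x y z hp h
    rw [if_neg Ane, if_neg Mne]

/-- Bruhat decomposition of `SL(3,ℝ)`: every determinant-one matrix lies in
`P·w·N` for a unique `w` among the six Weyl representatives. -/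
theorem bruhat_decomposition (g : Matrix (Fin 3) (Fin 3) ℝ) (hg : g.det = 1) :
    ∃ w ∈ Wset, (∃ p m, inP p ∧ inN m ∧ g = p * w * m) ∧
      ∀ w' ∈ Wset, (∃ p m, inP p ∧ inN m ∧ g = p * w' * m) → w' = w := by
  by_cases hA : g 2 0 = 0
  · by_cases hM : g 1 0 * g 2 1 - g 1 1 * g 2 0 = 0
    · by_cases hd : g 1 0 = 0
      · by_cases hi : g 2 1 = 0
        · -- w = 1
          refine ⟨1, by simp [Wset], ⟨g, nmat 0 0 0, ⟨tri_of g hd hA hi, hg⟩, ⟨0, 0, 0, rfl⟩,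
            by rw [mul_one, nmat_zero, mul_one]⟩, ?_⟩
          rintro w' hw' ⟨p', m', hp', ⟨x, y, z, rfl⟩, hEq⟩
          rw [uniq g p' w' x y z hp' hEq hw', if_pos hA, if_pos hM, if_pos hd, if_pos hi]
        · -- w = s2
          have hi0 := hi
          refine ⟨s2mat, by simp [Wset],
            ⟨g * nmat 0 0 (-(g 2 2) / g 2 1) * s2mat,
             nmat (-0) (0 * (-(g 2 2) / g 2 1) - 0) (-(-(g 2 2) / g 2 1)),
             ⟨tri_of _ ?_ ?_ ?_, decomp_det g s2mat 0 0 (-(g 2 2) / g 2 1) hg s2_det⟩,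
             ⟨_, _, _, rfl⟩, decomp_eq g s2mat s2mat 0 0 (-(g 2 2) / g 2 1) s2_sq⟩, ?_⟩
          · simp [nmat, s2mat, Matrix.mul_apply, Fin.sum_univ_three, Matrix.vecHead,
              Matrix.vecTail, hd, hA]
          · simp [nmat, s2mat, Matrix.mul_apply, Fin.sum_univ_three, Matrix.vecHead,
              Matrix.vecTail, hd, hA]
          · simp [nmat, s2mat, Matrix.mul_apply, Fin.sum_univ_three, Matrix.vecHead,
              Matrix.vecTail, hd, hA]
            field_simp
            ring
          · rintro w' hw' ⟨p', m', hp', ⟨x, y, z, rfl⟩, hEq⟩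
            rw [uniq g p' w' x y z hp' hEq hw', if_pos hA, if_pos hM, if_pos hd, if_neg hi]
      · -- w = s1
        have hi0 : g 2 1 = 0 := by
          have h1 : g 1 0 * g 2 1 = 0 := by linear_combination hM + g 1 1 * hA
          exact (mul_eq_zero.mp h1).resolve_left hd
        refine ⟨s1mat, by simp [Wset],
          ⟨g * nmat (-(g 1 1) / g 1 0) 0 0 * s1mat,
           nmat (-(-(g 1 1) / g 1 0)) ((-(g 1 1) / g 1 0) * 0 - 0) (-0),
           ⟨tri_of _ ?_ ?_ ?_, decomp_det g s1mat (-(g 1 1) / g 1 0) 0 0 hg s1_det⟩,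
           ⟨_, _, _, rfl⟩, decomp_eq g s1mat s1mat (-(g 1 1) / g 1 0) 0 0 s1_sq⟩, ?_⟩
        · simp [nmat, s1mat, Matrix.mul_apply, Fin.sum_univ_three, Matrix.vecHead,
            Matrix.vecTail, hA, hi0]
          field_simp
          ring
        · simp [nmat, s1mat, Matrix.mul_apply, Fin.sum_univ_three, Matrix.vecHead,
            Matrix.vecTail, hA, hi0]
        · simp [nmat, s1mat, Matrix.mul_apply, Fin.sum_univ_three, Matrix.vecHead,
            Matrix.vecTail, hA, hi0]
        · rintro w' hw' ⟨p', m', hp', ⟨x, y, z, rfl⟩, hEq⟩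
          rw [uniq g p' w' x y z hp' hEq hw', if_pos hA, if_pos hM, if_neg hd]
    · -- w = z2
      have hd : g 1 0 ≠ 0 := by
        intro h0; apply hM; rw [h0, hA]; ring
      have hi : g 2 1 ≠ 0 := by
        intro h0; apply hM; rw [h0, hA]; ring
      refine ⟨z2mat, by simp [Wset],
        ⟨g * nmat 0 ((g 1 1 * g 2 2 - g 1 2 * g 2 1) / (g 1 0 * g 2 1)) (-(g 2 2) / g 2 1) * z1mat,
         nmat (-0) (0 * (-(g 2 2) / g 2 1) - (g 1 1 * g 2 2 - g 1 2 * g 2 1) / (g 1 0 * g 2 1))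
           (-(-(g 2 2) / g 2 1)),
         ⟨tri_of _ ?_ ?_ ?_, decomp_det g z1mat 0 _ _ hg z1_det⟩,
         ⟨_, _, _, rfl⟩, decomp_eq g z2mat z1mat 0 _ _ z1_z2⟩, ?_⟩
      · simp [nmat, z1mat, Matrix.mul_apply, Fin.sum_univ_three, Matrix.vecHead,
          Matrix.vecTail, hA]
        field_simp
        ring
      · simp [nmat, z1mat, Matrix.mul_apply, Fin.sum_univ_three, Matrix.vecHead,
          Matrix.vecTail, hA]
        field_simp
        ring
      · simp [nmat, z1mat, Matrix.mul_apply, Fin.sum_univ_three, Matrix.vecHead,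
          Matrix.vecTail, hA]
      · rintro w' hw' ⟨p', m', hp', ⟨x, y, z, rfl⟩, hEq⟩
        rw [uniq g p' w' x y z hp' hEq hw', if_pos hA, if_neg hM]
  · by_cases hM : g 1 0 * g 2 1 - g 1 1 * g 2 0 = 0
    · -- w = z1
      refine ⟨z1mat, by simp [Wset],
        ⟨g * nmat (-(g 2 1) / g 2 0) (-(g 2 2) / g 2 0) 0 * z2mat,
         nmat (-(-(g 2 1) / g 2 0)) ((-(g 2 1) / g 2 0) * 0 - (-(g 2 2) / g 2 0)) (-0),
         ⟨tri_of _ ?_ ?_ ?_, decomp_det g z2mat _ _ 0 hg z2_det⟩,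
         ⟨_, _, _, rfl⟩, decomp_eq g z1mat z2mat _ _ 0 z2_z1⟩, ?_⟩
      · simp [nmat, z2mat, Matrix.mul_apply, Fin.sum_univ_three, Matrix.vecHead,
          Matrix.vecTail]
        field_simp
        linear_combination hM
      · simp [nmat, z2mat, Matrix.mul_apply, Fin.sum_univ_three, Matrix.vecHead,
          Matrix.vecTail]
        field_simp
        ring
      · simp [nmat, z2mat, Matrix.mul_apply, Fin.sum_univ_three, Matrix.vecHead,
          Matrix.vecTail]
        field_simp
        ring
      · rintro w' hw' ⟨p', m', hp', ⟨x, y, z, rfl⟩, hEq⟩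
        rw [uniq g p' w' x y z hp' hEq hw', if_neg hA, if_pos hM]
    · -- w = w0
      refine ⟨w0mat, by simp [Wset],
        ⟨g * nmat (-(g 2 1) / g 2 0)
            ((g 1 1 * g 2 2 - g 2 1 * g 1 2) / (g 1 0 * g 2 1 - g 1 1 * g 2 0))
            ((g 1 2 * g 2 0 - g 1 0 * g 2 2) / (g 1 0 * g 2 1 - g 1 1 * g 2 0)) * w0mat,
         nmat (-(-(g 2 1) / g 2 0))
            ((-(g 2 1) / g 2 0) * ((g 1 2 * g 2 0 - g 1 0 * g 2 2) / (g 1 0 * g 2 1 - g 1 1 * g 2 0))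
              - (g 1 1 * g 2 2 - g 2 1 * g 1 2) / (g 1 0 * g 2 1 - g 1 1 * g 2 0))
            (-((g 1 2 * g 2 0 - g 1 0 * g 2 2) / (g 1 0 * g 2 1 - g 1 1 * g 2 0))),
         ⟨tri_of _ ?_ ?_ ?_, decomp_det g w0mat _ _ _ hg w0_det⟩,
         ⟨_, _, _, rfl⟩, decomp_eq g w0mat w0mat _ _ _ w0_sq⟩, ?_⟩
      · simp [nmat, w0mat, Matrix.mul_apply, Fin.sum_univ_three, Matrix.vecHead,
          Matrix.vecTail]
        field_simp
        ring
      · simp [nmat, w0mat, Matrix.mul_apply, Fin.sum_univ_three, Matrix.vecHead,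
          Matrix.vecTail]
        field_simp [show g 2 1 * g 1 0 - g 2 0 * g 1 1 ≠ 0 from fun h => hM (by linear_combination h)]
        ring
      · simp [nmat, w0mat, Matrix.mul_apply, Fin.sum_univ_three, Matrix.vecHead,
          Matrix.vecTail]
        field_simp
        ring
      · rintro w' hw' ⟨p', m', hp', ⟨x, y, z, rfl⟩, hEq⟩
        rw [uniq g p' w' x y z hp' hEq hw', if_neg hA, if_neg hM]
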